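/- Let m be a prime power as above with b̃_m defined correspondingly. Then tilde{ν}_2'(m,3) = 6·b̃_m·(m+1)·gcd(m+1,2)/m is a unit modulo b̃_m. -/

import Mathlib

/-- In each prime-primary case with the corresponding b̃_m, the charge-3 index
    ν̃₂'(m,3) = 6·b̃_m·(m+1)·gcd(m+1,2)/m is an integer which is a unit
    modulo b̃_m. -/
theorem stmt_15 (m bm : ℕ)
    (h : (∃ ν : ℕ, 1 ≤ ν ∧ m = 2 ^ ν ∧ bm = m / 2) ∨
         (∃ ν : ℕ, 1 ≤ ν ∧ m = 3 ^ ν ∧ bm = m / 3) ∨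
         (∃ p ν : ℕ, p.Prime ∧ 3 < p ∧ 1 ≤ ν ∧ m = p ^ ν ∧ bm = m)) :
    ∃ z : ℤ,
      (z : ℚ) = 6 * (bm : ℚ) * ((m : ℚ) + 1) * (Nat.gcd (m + 1) 2 : ℚ) / m ∧
      IsUnit ((z : ZMod bm)) := by
  rcases h with ⟨ν, hν, hm, hb⟩ | ⟨ν, hν, hm, hb⟩ | ⟨p, ν, hp, hp3, hν, hm, hb⟩
  · -- m = 2^ν, bm = 2^(ν-1)
    obtain ⟨k, rfl⟩ : ∃ k, ν = k + 1 := ⟨ν - 1, by omega⟩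
    have hm2 : m = 2 * bm := by
      subst hm; rw [hb, pow_succ]; omega
    have hbm : bm = 2 ^ k := by omega
    have hgcd : Nat.gcd (m + 1) 2 = 1 := by
      rw [Nat.gcd_comm]
      exact (Nat.Prime.coprime_iff_not_dvd Nat.prime_two).2 (by omega)
    refine ⟨3 * (m + 1), ?_, ?_⟩
    · have hb0 : (bm : ℚ) ≠ 0 := by
        have : 0 < bm := by rw [hbm]; positivity
        exact_mod_cast this.ne'
      have hm0 : (m : ℚ) ≠ 0 := by
        have : (m : ℚ) = 2 * bm := by exact_mod_cast hm2
        rw [this]; positivity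
      rw [hgcd]
      have : (m : ℚ) = 2 * bm := by exact_mod_cast hm2
      push_cast
      field_simp [this]
      rw [this]; ring
    · have hz : ((3 * (m + 1) : ℤ) : ZMod bm) = ((3 : ℕ) : ZMod bm) := by
        have : (m : ZMod bm) = 0 := by
          rw [hm2]; push_cast [ZMod.natCast_self]; ring
        push_cast
        rw [this]; ring
      rw [hz, ZMod.isUnit_iff_coprime]
      rw [hbm]
      exact Nat.Coprime.pow_right k (by decide)
  · -- m = 3^ν, bm = 3^(ν-1)
    obtain ⟨k, rfl⟩ : ∃ k, ν = k + 1 := ⟨ν - 1, by omega⟩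
    have hbm : bm = 3 ^ k := by
      rw [hb, hm, pow_succ, Nat.mul_div_cancel _ (by norm_num)]
    have hm3 : m = 3 * bm := by
      rw [hbm, hm, pow_succ]; ring
    have hodd : m % 2 = 1 := by
      subst hm
      have : Odd (3 ^ (k + 1)) := Odd.pow (by decide)
      have := Nat.odd_iff.mp this
      omega
    have hgcd : Nat.gcd (m + 1) 2 = 2 :=
      Nat.gcd_eq_right (by omega)
    refine ⟨4 * (m + 1), ?_, ?_⟩
    · have hb0 : (bm : ℚ) ≠ 0 := by
        have : 0 < bm := by rw [hbm]; positivity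
        exact_mod_cast this.ne'
      have hm0 : (m : ℚ) ≠ 0 := by
        have : (m : ℚ) = 3 * bm := by exact_mod_cast hm3
        rw [this]; positivity
      rw [hgcd]
      have : (m : ℚ) = 3 * bm := by exact_mod_cast hm3
      push_cast
      field_simp [this]
      rw [this]; ring
    · have hz : ((4 * (m + 1) : ℤ) : ZMod bm) = ((4 : ℕ) : ZMod bm) := by
        have : (m : ZMod bm) = 0 := by
          rw [hm3]; push_cast [ZMod.natCast_self]; ring
        push_cast
        rw [this]; ring
      rw [hz, ZMod.isUnit_iff_coprime]
      rw [hbm]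
      exact Nat.Coprime.pow_right k (by decide)
  · -- m = p^ν, bm = m
    have hm0 : 0 < m := by subst hm; positivity
    have hodd : m % 2 = 1 := by
      subst hm
      have : Odd (p ^ ν) := Odd.pow (hp.odd_of_ne_two (by omega))
      have := Nat.odd_iff.mp this
      omega
    have hgcd : Nat.gcd (m + 1) 2 = 2 :=
      Nat.gcd_eq_right (by omega)
    refine ⟨12 * (m + 1), ?_, ?_⟩
    · have hmq : (m : ℚ) ≠ 0 := by exact_mod_cast hm0.ne'
      rw [hgcd, hb]
      push_cast
      field_simp
      ring
    · have hz : ((12 * (m + 1) : ℤ) : ZMod bm) = ((12 : ℕ) : ZMod bm) := by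
        have : (m : ZMod bm) = 0 := by rw [hb, ZMod.natCast_self]
        push_cast
        rw [this]; ring
      rw [hz, ZMod.isUnit_iff_coprime]
      rw [hb, hm]
      refine Nat.Coprime.pow_right ν ?_
      rw [Nat.coprime_comm]
      refine (Nat.Prime.coprime_iff_not_dvd hp).2 ?_
      intro hdvd
      have hle := Nat.le_of_dvd (by norm_num) hdvd
      clear * - hp hp3 hdvd hle
      interval_cases p <;> first
        | exact absurd hp (by decide)
        | omega
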